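/- Let ℓ ≥ 1 be an integer and let G be a graph whose edge set is partitioned as F ∪ M, where F is a forest and the distance in F between any two distinct edges of M is at least 4ℓ−2. If G contains no odd cycle of length at most 2ℓ−1, then G admits a graph homomorphism to the cycle C_{2ℓ+1}. -/

import Mathlib

open SimpleGraph

namespace Stmt6

/-- The "wrap" walk on `ZMod n`: a walk of values starting at `t` (at distance `0`)
that goes monotonically towards `X` and then oscillates. -/
noncomputable def psi (n : ℕ) (t X : ZMod n) (d : ℕ) : ZMod n :=
  if Odd (X - t).val then
    t + ((min d (X - t).val : ℕ) : ZMod n) - (((d - (X - t).val) % 2 : ℕ) : ZMod n)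
  else
    t - ((min d (t - X).val : ℕ) : ZMod n) + (((d - (t - X).val) % 2 : ℕ) : ZMod n)

lemma psi_zero (n : ℕ) (t X : ZMod n) : psi n t X 0 = t := by
  unfold psi
  split <;> simp

lemma psi_step (n : ℕ) (t X : ZMod n) (d : ℕ) :
    psi n t X (d + 1) = psi n t X d + 1 ∨ psi n t X d = psi n t X (d + 1) + 1 := by
  unfold psi
  split
  · set δ := (X - t).val with hδ
    rcases lt_or_ge d δ with hlt | hge
    · left
      have h1 : min (d+1) δ = d + 1 := min_eq_left (by omega)
      have h2 : min d δ = d := min_eq_left (by omega)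
      have h3 : d + 1 - δ = 0 := by omega
      have h4 : d - δ = 0 := by omega
      rw [h1, h2, h3, h4]
      push_cast
      ring
    · have h1 : min (d+1) δ = δ := min_eq_right (by omega)
      have h2 : min d δ = δ := min_eq_right (by omega)
      rcases Nat.even_or_odd (d - δ) with he | ho
      · right
        have h3 : (d - δ) % 2 = 0 := Nat.even_iff.mp he
        have h4 : (d + 1 - δ) % 2 = 1 := by omega
        rw [h1, h2, h3, h4]
        push_cast
        ring
      · left
        have h3 : (d - δ) % 2 = 1 := Nat.odd_iff.mp ho
        have h4 : (d + 1 - δ) % 2 = 0 := by omega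
        rw [h1, h2, h3, h4]
        push_cast
        ring
  · set δ := (t - X).val with hδ
    rcases lt_or_ge d δ with hlt | hge
    · right
      have h1 : min (d+1) δ = d + 1 := min_eq_left (by omega)
      have h2 : min d δ = d := min_eq_left (by omega)
      have h3 : d + 1 - δ = 0 := by omega
      have h4 : d - δ = 0 := by omega
      rw [h1, h2, h3, h4]
      push_cast
      ring
    · have h1 : min (d+1) δ = δ := min_eq_right (by omega)
      have h2 : min d δ = δ := min_eq_right (by omega)
      rcases Nat.even_or_odd (d - δ) with he | ho
      · left
        have h3 : (d - δ) % 2 = 0 := Nat.even_iff.mp he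
        have h4 : (d + 1 - δ) % 2 = 1 := by omega
        rw [h1, h2, h3, h4]
        push_cast
        ring
      · right
        have h3 : (d - δ) % 2 = 1 := Nat.odd_iff.mp ho
        have h4 : (d + 1 - δ) % 2 = 0 := by omega
        rw [h1, h2, h3, h4]
        push_cast
        ring

lemma psi_last (ℓ : ℕ) (hℓ : 1 ≤ ℓ) (t X : ZMod (2*ℓ+1)) (h : t ≠ X) :
    psi (2*ℓ+1) t X (2*ℓ-1) = X := by
  haveI : NeZero (2*ℓ+1) := ⟨by omega⟩
  have hXt : X - t ≠ 0 := sub_ne_zero.mpr (Ne.symm h)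
  have hvne : (X - t).val ≠ 0 := fun hc => hXt ((ZMod.val_eq_zero _).mp hc)
  have hvlt : (X - t).val < 2*ℓ+1 := ZMod.val_lt _
  unfold psi
  split
  · next hodd =>
    set δ := (X - t).val with hδ
    have hle : δ ≤ 2*ℓ-1 := by
      rcases Nat.odd_iff.mp hodd with h2
      omega
    have h1 : min (2*ℓ-1) δ = δ := min_eq_right hle
    have h2 : (2*ℓ-1 - δ) % 2 = 0 := by
      have := Nat.odd_iff.mp hodd
      omega
    rw [h1, h2]
    push_cast
    rw [ZMod.natCast_val, ZMod.cast_id]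
    ring
  · next hnodd =>
    have hδe : Even (X - t).val := Nat.not_odd_iff_even.mp hnodd
    have htX : t - X = -(X - t) := by ring
    have hval : (t - X).val = 2*ℓ+1 - (X - t).val := by
      rw [htX, ZMod.neg_val, if_neg hXt]
    set δ := (X - t).val with hδ
    have hδ2 : 2 ≤ δ := by
      rcases Nat.even_iff.mp hδe with h2
      omega
    have hodd' : (t - X).val % 2 = 1 := by
      have := Nat.even_iff.mp hδe
      omega
    have hle : (t - X).val ≤ 2*ℓ-1 := by omega
    have h1 : min (2*ℓ-1) (t - X).val = (t - X).val := min_eq_right hle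
    have h2 : (2*ℓ-1 - (t - X).val) % 2 = 0 := by omega
    rw [h1, h2]
    push_cast
    rw [ZMod.natCast_val, ZMod.cast_id]
    ring


variable {V : Type*} {F : SimpleGraph V}

/-- In a forest, distances from a fixed vertex to the endpoints of an edge differ by
exactly one. -/
lemma forest_dist_succ (hF : F.IsAcyclic) {r u v : V} (huv : F.Adj u v)
    (hr : F.Reachable r u) :
    F.dist r u = F.dist r v + 1 ∨ F.dist r v = F.dist r u + 1 := by
  classical
  obtain ⟨p, hp, hlen⟩ := hr.exists_path_of_dist
  by_cases hv : v ∈ p.support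
  · left
    have htake : (p.takeUntil v hv).IsPath := hp.takeUntil hv
    have hdrop : (p.dropUntil v hv).IsPath := hp.dropUntil hv
    -- the unique path from v to u is the single edge
    have hedge : (Walk.cons huv.symm Walk.nil : F.Walk v u).IsPath := by
      simp [Walk.isPath_def, huv.ne']
    have huniq : p.dropUntil v hv = Walk.cons huv.symm Walk.nil := by
      have := hF.path_unique ⟨p.dropUntil v hv, hdrop⟩ ⟨Walk.cons huv.symm Walk.nil, hedge⟩
      exact congrArg Subtype.val this
    have hsplit : (p.takeUntil v hv).length + (p.dropUntil v hv).length = p.length := by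
      rw [← Walk.length_append, Walk.take_spec]
    have hlen2 : (p.dropUntil v hv).length = 1 := by rw [huniq]; simp
    have h1 : F.dist r v ≤ (p.takeUntil v hv).length := dist_le _
    have h2 : F.dist r u ≤ F.dist r v + 1 := by
      obtain ⟨q, hq, hqlen⟩ := (hr.trans huv.reachable).exists_path_of_dist
      have : F.dist r u ≤ (q.append (Walk.cons huv.symm Walk.nil)).length := dist_le _
      rw [Walk.length_append] at this
      simp at this
      omega
    omega
  · right
    have hrev : (Walk.cons huv.symm p.reverse).IsPath := by
      apply hp.reverse.cons
      simpa using hv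
    obtain ⟨q, hq, hqlen⟩ := (hr.trans huv.reachable).exists_path_of_dist
    have huniq := hF.path_unique ⟨q, hq⟩ ⟨(Walk.cons huv.symm p.reverse).reverse, hrev.reverse⟩
    have : q.length = p.length + 1 := by
      have := congrArg (fun w : F.Path r v => (w : F.Walk r v).length) huniq
      simpa using this
    omega

/-- Parity of walks in a forest: relative to a base point `r`, a walk of length `L`
from `u` to `v` forces `dist r u + L ≡ dist r v (mod 2)`. -/
lemma forest_parity (hF : F.IsAcyclic) {r u v : V} (hr : F.Reachable r u)
    (w : F.Walk u v) : (F.dist r u + w.length) % 2 = F.dist r v % 2 := by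
  induction w with
  | nil => simp
  | @cons a b c hab q ih =>
    have hrb : F.Reachable r b := hr.trans hab.reachable
    have hstep := forest_dist_succ hF hab hr
    have := ih hrb
    simp only [Walk.length_cons]
    omega


variable {V : Type*}

noncomputable def rt (F : SimpleGraph V) (v : V) : V := (F.connectedComponentMk v).out

lemma rt_reachable (F : SimpleGraph V) (v : V) : F.Reachable (rt F v) v := by
  have h : F.connectedComponentMk (rt F v) = F.connectedComponentMk v :=
    (F.connectedComponentMk v).out_eq
  exact ConnectedComponent.eq.mp h

lemma rt_congr {F : SimpleGraph V} {u v : V} (h : F.Reachable u v) : rt F u = rt F v :=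
  congrArg Quot.out (ConnectedComponent.eq.mpr h)

def hasM (M : Set (Sym2 V)) (a : V) : Prop := ∃ b, s(a, b) ∈ M

open Classical in
noncomputable def partner (M : Set (Sym2 V)) (a : V) : V :=
  if h : hasM M a then h.choose else a

lemma partner_mem {M : Set (Sym2 V)} {a : V} (h : hasM M a) : s(a, partner M a) ∈ M := by
  unfold partner
  rw [dif_pos h]
  exact h.choose_spec

noncomputable def pick1 (e : Sym2 V) : V := e.out.1
noncomputable def pick2 (e : Sym2 V) : V := e.out.2

lemma pick_eq (e : Sym2 V) : s(pick1 e, pick2 e) = e := by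
  show Quot.mk _ (e.out.1, e.out.2) = e
  rw [Prod.mk.eta]
  exact e.out_eq

def isCtr (F : SimpleGraph V) (M : Set (Sym2 V)) (a : V) : Prop :=
  hasM M a ∧ (¬ F.Reachable a (partner M a) ∨
    (Even (F.dist a (partner M a)) ∧ a = pick1 s(a, partner M a)))

noncomputable def Xv (F : SimpleGraph V) (ℓ : ℕ) (a : V) : ZMod (2*ℓ+1) :=
  if Even (F.dist (rt F a) a) then 1 else 0

noncomputable def c0 (F : SimpleGraph V) (ℓ : ℕ) (v : V) : ZMod (2*ℓ+1) :=
  if Even (F.dist (rt F v) v) then 0 else 1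

noncomputable def crossC (F : SimpleGraph V) (ℓ : ℕ) (e : Sym2 V) : ZMod (2*ℓ+1) :=
  if Xv F ℓ (pick1 e) + 1 = Xv F ℓ (pick2 e) - 1 then Xv F ℓ (pick1 e) + 2
  else Xv F ℓ (pick1 e) + 1

open Classical in
noncomputable def tval (F : SimpleGraph V) (M : Set (Sym2 V)) (ℓ : ℕ) (a : V) :
    ZMod (2*ℓ+1) :=
  if F.Reachable a (partner M a) then
    (if Even (F.dist (rt F a) a) then -1 else 2)
  else
    (if a = pick1 s(a, partner M a) then crossC F ℓ s(a, partner M a)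
     else crossC F ℓ s(a, partner M a) + 1)

open Classical in
noncomputable def phi (F : SimpleGraph V) (M : Set (Sym2 V)) (ℓ : ℕ) (v : V) :
    ZMod (2*ℓ+1) :=
  if h : ∃ a, isCtr F M a ∧ F.Reachable a v ∧ F.dist a v ≤ 2*ℓ-2 then
    psi (2*ℓ+1) (tval F M ℓ h.choose) (Xv F ℓ h.choose) (F.dist h.choose v)
  else c0 F ℓ v

/-- adjacency on `ZMod n` as values on the cycle -/
def AdjZ (n : ℕ) (x y : ZMod n) : Prop := x = y + 1 ∨ y = x + 1

lemma AdjZ.symm {n : ℕ} {x y : ZMod n} (h : AdjZ n x y) : AdjZ n y x := Or.symm h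

lemma zmod_one_ne_zero {ℓ : ℕ} (hℓ : 1 ≤ ℓ) : (1 : ZMod (2*ℓ+1)) ≠ 0 := by
  haveI : Fact (1 < 2*ℓ+1) := ⟨by omega⟩
  exact one_ne_zero

lemma zmod_two_ne_zero {ℓ : ℕ} (hℓ : 1 ≤ ℓ) : (2 : ZMod (2*ℓ+1)) ≠ 0 := by
  intro h
  have h2 : ((2:ℕ) : ZMod (2*ℓ+1)) = 0 := by exact_mod_cast h
  rw [ZMod.natCast_eq_zero_iff] at h2
  have := Nat.le_of_dvd (by norm_num) h2
  omega

section ctx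

variable {F G : SimpleGraph V} {M : Set (Sym2 V)} {ℓ : ℕ} {a b c u v : V}

lemma M_mem_edgeSet (hpart : F.edgeSet ∪ M = G.edgeSet) {e : Sym2 V} (h : e ∈ M) :
    e ∈ G.edgeSet := hpart ▸ Set.mem_union_right _ h

lemma M_ne (hpart : F.edgeSet ∪ M = G.edgeSet) (h : s(a,b) ∈ M) : a ≠ b := by
  have := G.not_isDiag_of_mem_edgeSet (M_mem_edgeSet hpart h)
  simpa [Sym2.mk_isDiag_iff] using this

lemma M_unique (hℓ : 1 ≤ ℓ)
    (hdist : ∀ e₁ ∈ M, ∀ e₂ ∈ M, e₁ ≠ e₂ →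
      ∀ x ∈ e₁, ∀ y ∈ e₂, ∀ w : F.Walk x y, 4 * ℓ - 2 ≤ w.length)
    (h1 : s(a,b) ∈ M) (h2 : s(a,c) ∈ M) : b = c := by
  by_cases he : s(a,b) = s(a,c)
  · rcases Sym2.eq_iff.mp he with ⟨_, h⟩ | ⟨h3, h4⟩
    · exact h
    · rw [h4, ← h3]
  · have := hdist _ h1 _ h2 he a (Sym2.mem_mk_left a b) a (Sym2.mem_mk_left a c) Walk.nil
    simp only [Walk.length_nil] at this
    omega

lemma partner_eq (hℓ : 1 ≤ ℓ)
    (hdist : ∀ e₁ ∈ M, ∀ e₂ ∈ M, e₁ ≠ e₂ →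
      ∀ x ∈ e₁, ∀ y ∈ e₂, ∀ w : F.Walk x y, 4 * ℓ - 2 ≤ w.length)
    (h : s(a,b) ∈ M) : partner M a = b :=
  M_unique hℓ hdist (partner_mem ⟨b, h⟩) h

lemma ctr_far (hℓ : 1 ≤ ℓ)
    (hdist : ∀ e₁ ∈ M, ∀ e₂ ∈ M, e₁ ≠ e₂ →
      ∀ x ∈ e₁, ∀ y ∈ e₂, ∀ w : F.Walk x y, 4 * ℓ - 2 ≤ w.length)
    (ha : isCtr F M a) (hb : isCtr F M b) (hne : a ≠ b)
    (w : F.Walk a b) : 4*ℓ-2 ≤ w.length := by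
  have hea : s(a, partner M a) ∈ M := partner_mem ha.1
  have heb : s(b, partner M b) ∈ M := partner_mem hb.1
  by_cases he : s(a, partner M a) = s(b, partner M b)
  · exfalso
    rcases Sym2.eq_iff.mp he with ⟨h1, _⟩ | ⟨h1, h2⟩
    · exact hne h1
    · have hr : F.Reachable a b := w.reachable
      have hpa : a = pick1 s(a, partner M a) := by
        rcases ha.2 with hno | ⟨_, hp⟩
        · rw [h2] at hno; exact absurd hr hno
        · exact hp
      have hpb : b = pick1 s(b, partner M b) := by
        rcases hb.2 with hno | ⟨_, hp⟩
        · rw [← h1] at hno; exact absurd hr.symm hno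
        · exact hp
      rw [← he] at hpb
      exact hne (hpa.trans hpb.symm)
  · exact hdist _ hea _ heb he a (Sym2.mem_mk_left _ _) b (Sym2.mem_mk_left _ _) w

lemma ball_unique (hℓ : 1 ≤ ℓ)
    (hdist : ∀ e₁ ∈ M, ∀ e₂ ∈ M, e₁ ≠ e₂ →
      ∀ x ∈ e₁, ∀ y ∈ e₂, ∀ w : F.Walk x y, 4 * ℓ - 2 ≤ w.length)
    (ha : isCtr F M a) (hb : isCtr F M b) (hra : F.Reachable a v) (hrb : F.Reachable b v)
    (hda : F.dist a v ≤ 2*ℓ-2) (hdb : F.dist b v ≤ 2*ℓ-2) : a = b := by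
  by_contra hne
  obtain ⟨p, _, hp⟩ := hra.exists_path_of_dist
  obtain ⟨q, _, hq⟩ := hrb.exists_path_of_dist
  have := ctr_far hℓ hdist ha hb hne (p.append q.reverse)
  rw [Walk.length_append, Walk.length_reverse, hp, hq] at this
  omega

lemma phi_in (hℓ : 1 ≤ ℓ)
    (hdist : ∀ e₁ ∈ M, ∀ e₂ ∈ M, e₁ ≠ e₂ →
      ∀ x ∈ e₁, ∀ y ∈ e₂, ∀ w : F.Walk x y, 4 * ℓ - 2 ≤ w.length)
    (ha : isCtr F M a) (hr : F.Reachable a v) (hd : F.dist a v ≤ 2*ℓ-2) :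
    phi F M ℓ v = psi (2*ℓ+1) (tval F M ℓ a) (Xv F ℓ a) (F.dist a v) := by
  have hex : ∃ a, isCtr F M a ∧ F.Reachable a v ∧ F.dist a v ≤ 2*ℓ-2 := ⟨a, ha, hr, hd⟩
  unfold phi
  rw [dif_pos hex]
  obtain ⟨h1, h2, h3⟩ := hex.choose_spec
  rw [ball_unique hℓ hdist h1 ha h2 hr h3 hd]

lemma phi_out (h : ∀ a, isCtr F M a → F.Reachable a v → ¬ (F.dist a v ≤ 2*ℓ-2)) :
    phi F M ℓ v = c0 F ℓ v := by
  unfold phi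
  rw [dif_neg]
  rintro ⟨a, ha, hr, hd⟩
  exact h a ha hr hd

lemma c0_parity (hF : F.IsAcyclic) (hr : F.Reachable u v) :
    (F.dist (rt F u) u + F.dist u v) % 2 = F.dist (rt F v) v % 2 := by
  obtain ⟨p, _, hp⟩ := hr.exists_path_of_dist
  have h := forest_parity hF (rt_reachable F u) p
  rw [hp] at h
  rw [← rt_congr hr]
  exact h

lemma tval_ne_X (hℓ : 1 ≤ ℓ) (hpart : F.edgeSet ∪ M = G.edgeSet)
    (ha : isCtr F M a) : tval F M ℓ a ≠ Xv F ℓ a := by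
  have hone : (1 : ZMod (2*ℓ+1)) ≠ 0 := zmod_one_ne_zero hℓ
  have htwo : (2 : ZMod (2*ℓ+1)) ≠ 0 := zmod_two_ne_zero hℓ
  unfold tval
  by_cases hre : F.Reachable a (partner M a)
  · rw [if_pos hre]
    unfold Xv
    by_cases hev : Even (F.dist (rt F a) a)
    · rw [if_pos hev, if_pos hev]
      intro h
      exact htwo (by linear_combination -h)
    · rw [if_neg hev, if_neg hev]
      intro h
      exact htwo (by linear_combination h)
  · rw [if_neg hre]
    have hne := M_ne (G := G) hpart (partner_mem ha.1)
    have hpick := Sym2.eq_iff.mp (pick_eq s(a, partner M a))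
    rcases hpick with ⟨h1, h2⟩ | ⟨h1, h2⟩
    · rw [if_pos h1.symm]
      unfold crossC
      rw [h1]
      split
      · intro h
        exact htwo (by linear_combination h)
      · intro h
        exact hone (by linear_combination h)
    · rw [if_neg (by rw [h1]; exact hne)]
      unfold crossC
      rw [h2]
      split
      · next hc =>
        intro h
        exact hone (by linear_combination h - hc)
      · next hc =>
        intro h
        exact hc (by linear_combination h)

lemma sameEven_ge (hℓ : 1 ≤ ℓ) (hF : F.IsAcyclic)
    (hpart : F.edgeSet ∪ M = G.edgeSet) (hdisj : Disjoint F.edgeSet M)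
    (hodd : ∀ (u : V) (w : G.Walk u u), w.IsCycle → Odd w.length → ¬ w.length ≤ 2 * ℓ - 1)
    (hm : s(u,v) ∈ M) (hr : F.Reachable u v) (he : Even (F.dist u v)) :
    2*ℓ ≤ F.dist u v := by
  have hadj : G.Adj u v := (G.mem_edgeSet).mp (M_mem_edgeSet hpart hm)
  have hne : u ≠ v := hadj.ne
  have hd0 : F.dist u v ≠ 0 := by
    intro h
    rcases (F.dist_eq_zero_iff_eq_or_not_reachable).mp h with h' | h'
    · exact hne h'
    · exact h' hr
  obtain ⟨p, hp, hplen⟩ := hr.symm.exists_path_of_dist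
  have pe : ∀ e ∈ p.edges, e ∈ G.edgeSet := fun e hein =>
    hpart ▸ Set.mem_union_left _ (p.edges_subset_edgeSet hein)
  have hnotin : s(u,v) ∉ (p.transfer G pe).edges := by
    rw [Walk.edges_transfer]
    intro hin
    exact (Set.disjoint_left.mp hdisj (p.edges_subset_edgeSet hin)) hm
  have hc : (Walk.cons hadj (p.transfer G pe)).IsCycle :=
    Path.cons_isCycle ⟨p.transfer G pe, hp.transfer pe⟩ hadj hnotin
  have hlen : (Walk.cons hadj (p.transfer G pe)).length = F.dist u v + 1 := by
    rw [Walk.length_cons, Walk.length_transfer, hplen, F.dist_comm]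
  have hoddlen : Odd (Walk.cons hadj (p.transfer G pe)).length := by
    rw [hlen]; exact he.add_one
  have := hodd u _ hc hoddlen
  rw [hlen] at this
  obtain ⟨k, hk⟩ := he
  omega

end ctx

section adj

variable {F G : SimpleGraph V} {M : Set (Sym2 V)} {ℓ : ℕ} {a u v : V}

lemma c0_adj_of_odd (hF : F.IsAcyclic) (hr : F.Reachable u v)
    (hodd : F.dist u v % 2 = 1) : AdjZ (2*ℓ+1) (c0 F ℓ u) (c0 F ℓ v) := by
  have hpar := c0_parity hF hr
  have hiff : Even (F.dist (rt F v) v) ↔ ¬ Even (F.dist (rt F u) u) := by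
    rw [Nat.even_iff, Nat.even_iff]
    omega
  unfold c0
  by_cases hev : Even (F.dist (rt F u) u)
  · rw [if_pos hev, if_neg (by simp [hiff, hev])]
    right; ring
  · rw [if_neg hev, if_pos (hiff.mpr hev)]
    left; ring

lemma c0_eq_of_even (hF : F.IsAcyclic) (hr : F.Reachable u v)
    (hevd : F.dist u v % 2 = 0) : c0 F ℓ u = c0 F ℓ v := by
  have hpar := c0_parity hF hr
  have hiff : Even (F.dist (rt F v) v) ↔ Even (F.dist (rt F u) u) := by
    rw [Nat.even_iff, Nat.even_iff]
    omega
  unfold c0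
  by_cases hev : Even (F.dist (rt F u) u)
  · rw [if_pos hev, if_pos (hiff.mpr hev)]
  · rw [if_neg hev, if_neg (by simp [hiff, hev])]

lemma adj_F_mixed (hℓ : 1 ≤ ℓ) (hF : F.IsAcyclic)
    (hpart : F.edgeSet ∪ M = G.edgeSet)
    (hdist : ∀ e₁ ∈ M, ∀ e₂ ∈ M, e₁ ≠ e₂ →
      ∀ x ∈ e₁, ∀ y ∈ e₂, ∀ w : F.Walk x y, 4 * ℓ - 2 ≤ w.length)
    (huv : F.Adj u v) (ha : isCtr F M a) (hra : F.Reachable a u)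
    (hda : F.dist a u ≤ 2*ℓ-2)
    (hv : ∀ a', isCtr F M a' → F.Reachable a' v → ¬ (F.dist a' v ≤ 2*ℓ-2)) :
    AdjZ (2*ℓ+1) (phi F M ℓ u) (phi F M ℓ v) := by
  have hrv : F.Reachable a v := hra.trans huv.reachable
  have hnv : ¬ (F.dist a v ≤ 2*ℓ-2) := hv a ha hrv
  rcases forest_dist_succ hF huv hra with hs | hs
  · omega
  · have h1 : F.dist a u = 2*ℓ-2 := by omega
    have h2 : F.dist a v = 2*ℓ-1 := by omega
    have hXc : c0 F ℓ v = Xv F ℓ a := by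
      have hpar := c0_parity hF hrv
      rw [h2] at hpar
      have hiff : Even (F.dist (rt F v) v) ↔ ¬ Even (F.dist (rt F a) a) := by
        rw [Nat.even_iff, Nat.even_iff]
        omega
      unfold c0 Xv
      by_cases hev : Even (F.dist (rt F a) a)
      · rw [if_pos hev, if_neg (by simp [hiff, hev])]
      · rw [if_neg hev, if_pos (hiff.mpr hev)]
    have hlast : psi (2*ℓ+1) (tval F M ℓ a) (Xv F ℓ a) (2*ℓ-1) = Xv F ℓ a :=
      psi_last ℓ hℓ _ _ (tval_ne_X hℓ hpart ha)
    have hstep := psi_step (2*ℓ+1) (tval F M ℓ a) (Xv F ℓ a) (2*ℓ-2)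
    have h21 : 2*ℓ-2+1 = 2*ℓ-1 := by omega
    rw [h21] at hstep
    have hadj : AdjZ (2*ℓ+1) (psi (2*ℓ+1) (tval F M ℓ a) (Xv F ℓ a) (2*ℓ-2))
        (psi (2*ℓ+1) (tval F M ℓ a) (Xv F ℓ a) (2*ℓ-1)) := Or.symm hstep
    rw [hlast] at hadj
    rw [phi_in hℓ hdist ha hra hda, phi_out hv, h1, hXc]
    exact hadj

lemma adj_F (hℓ : 1 ≤ ℓ) (hF : F.IsAcyclic)
    (hpart : F.edgeSet ∪ M = G.edgeSet)
    (hdist : ∀ e₁ ∈ M, ∀ e₂ ∈ M, e₁ ≠ e₂ →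
      ∀ x ∈ e₁, ∀ y ∈ e₂, ∀ w : F.Walk x y, 4 * ℓ - 2 ≤ w.length)
    (huv : F.Adj u v) : AdjZ (2*ℓ+1) (phi F M ℓ u) (phi F M ℓ v) := by
  by_cases hu : ∃ x, isCtr F M x ∧ F.Reachable x u ∧ F.dist x u ≤ 2*ℓ-2
  · obtain ⟨x, hx, hrx, hdx⟩ := hu
    by_cases hv : ∃ y, isCtr F M y ∧ F.Reachable y v ∧ F.dist y v ≤ 2*ℓ-2
    · obtain ⟨y, hy, hry, hdy⟩ := hv
      have heq : x = y := by
        by_contra hne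
        obtain ⟨p, _, hp⟩ := hrx.exists_path_of_dist
        obtain ⟨q, _, hq⟩ := hry.exists_path_of_dist
        have := ctr_far hℓ hdist hx hy hne
          ((p.append (Walk.cons huv Walk.nil)).append q.reverse)
        rw [Walk.length_append, Walk.length_append, Walk.length_cons, Walk.length_nil,
          Walk.length_reverse, hp, hq] at this
        omega
      subst heq
      rw [phi_in hℓ hdist hx hrx hdx, phi_in hℓ hdist hx hry hdy]
      rcases forest_dist_succ hF huv hrx with hs | hs
      · rw [hs]
        exact psi_step _ _ _ _
      · rw [hs]
        exact Or.symm (psi_step _ _ _ _)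
    · push_neg at hv
      exact adj_F_mixed hℓ hF hpart hdist huv hx hrx hdx
        (fun a' ha' hr' => not_le.mpr (hv a' ha' hr'))
  · by_cases hv : ∃ y, isCtr F M y ∧ F.Reachable y v ∧ F.dist y v ≤ 2*ℓ-2
    · obtain ⟨y, hy, hry, hdy⟩ := hv
      push_neg at hu
      exact AdjZ.symm (adj_F_mixed hℓ hF hpart hdist huv.symm hy hry hdy
        (fun a' ha' hr' => not_le.mpr (hu a' ha' hr')))
    · push_neg at hu hv
      rw [phi_out (fun a' ha' hr' => not_le.mpr (hu a' ha' hr')),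
        phi_out (fun a' ha' hr' => not_le.mpr (hv a' ha' hr'))]
      have hd1 : F.dist u v = 1 := by
        have hle : F.dist u v ≤ 1 := by
          have := F.dist_le (Walk.cons huv Walk.nil)
          simpa using this
        have hne : F.dist u v ≠ 0 := by
          intro h
          rcases (F.dist_eq_zero_iff_eq_or_not_reachable).mp h with h' | h'
          · exact huv.ne h'
          · exact h' huv.reachable
        omega
      exact c0_adj_of_odd hF huv.reachable (by rw [hd1])

lemma no_ball_odd (hℓ : 1 ≤ ℓ)
    (hdist : ∀ e₁ ∈ M, ∀ e₂ ∈ M, e₁ ≠ e₂ →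
      ∀ x ∈ e₁, ∀ y ∈ e₂, ∀ w : F.Walk x y, 4 * ℓ - 2 ≤ w.length)
    (hm : s(u,v) ∈ M) (hr : F.Reachable u v) (hoddd : ¬ Even (F.dist u v)) :
    ∀ a, isCtr F M a → F.Reachable a u → ¬ (F.dist a u ≤ 2*ℓ-2) := by
  intro a ha hrau hd
  have hpu : partner M u = v := partner_eq hℓ hdist hm
  have hpv : partner M v = u := partner_eq hℓ hdist (Sym2.eq_swap ▸ hm)
  by_cases hau : a = u
  · subst hau
    rcases ha.2 with hno | ⟨hevn, _⟩
    · rw [hpu] at hno; exact hno hr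
    · rw [hpu] at hevn; exact hoddd hevn
  · by_cases hav : a = v
    · subst hav
      rcases ha.2 with hno | ⟨hevn, _⟩
      · rw [hpv] at hno; exact hno hr.symm
      · rw [hpv, F.dist_comm] at hevn; exact hoddd hevn
    · have hene : s(a, partner M a) ≠ s(u,v) := by
        intro h
        rcases Sym2.eq_iff.mp h with ⟨h1, _⟩ | ⟨h1, _⟩
        · exact hau h1
        · exact hav h1
      obtain ⟨p, _, hp⟩ := hrau.exists_path_of_dist
      have := hdist _ (partner_mem ha.1) _ hm hene a (Sym2.mem_mk_left _ _)
        u (Sym2.mem_mk_left _ _) p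
      omega

lemma adj_M_even (hℓ : 1 ≤ ℓ) (hF : F.IsAcyclic)
    (hpart : F.edgeSet ∪ M = G.edgeSet) (hdisj : Disjoint F.edgeSet M)
    (hdist : ∀ e₁ ∈ M, ∀ e₂ ∈ M, e₁ ≠ e₂ →
      ∀ x ∈ e₁, ∀ y ∈ e₂, ∀ w : F.Walk x y, 4 * ℓ - 2 ≤ w.length)
    (hodd : ∀ (w : V) (c : G.Walk w w), c.IsCycle → Odd c.length → ¬ c.length ≤ 2 * ℓ - 1)
    (hm : s(u,v) ∈ M) (hr : F.Reachable u v) (hev : Even (F.dist u v))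
    (hpick : u = pick1 s(u,v)) :
    AdjZ (2*ℓ+1) (phi F M ℓ u) (phi F M ℓ v) := by
  have hMu : hasM M u := ⟨v, hm⟩
  have hpu : partner M u = v := partner_eq hℓ hdist hm
  have hpv : partner M v = u := partner_eq hℓ hdist (Sym2.eq_swap ▸ hm)
  have hne : u ≠ v := M_ne hpart hm
  have hge : 2*ℓ ≤ F.dist u v := sameEven_ge hℓ hF hpart hdisj hodd hm hr hev
  have hcu : isCtr F M u := ⟨hMu, Or.inr ⟨by rwa [hpu], by rw [hpu]; exact hpick⟩⟩
  have hphiu : phi F M ℓ u = tval F M ℓ u := by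
    rw [phi_in hℓ hdist hcu (Reachable.refl u) (by rw [F.dist_self]; exact Nat.zero_le _),
      F.dist_self, psi_zero]
  have hvout : ∀ x, isCtr F M x → F.Reachable x v → ¬ (F.dist x v ≤ 2*ℓ-2) := by
    intro x hx hrxv hd
    by_cases hxu : x = u
    · subst hxu; omega
    · by_cases hxv : x = v
      · subst hxv
        rcases hx.2 with hno | ⟨_, hp⟩
        · rw [hpv] at hno; exact hno hr.symm
        · rw [hpv] at hp
          rw [Sym2.eq_swap] at hp
          exact hne (hpick.trans hp.symm)
      · have hene : s(x, partner M x) ≠ s(u,v) := by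
          intro h
          rcases Sym2.eq_iff.mp h with ⟨h1, _⟩ | ⟨h1, _⟩
          · exact hxu h1
          · exact hxv h1
        obtain ⟨p, _, hp⟩ := hrxv.exists_path_of_dist
        have := hdist _ (partner_mem hx.1) _ hm hene x (Sym2.mem_mk_left _ _)
          v (Sym2.mem_iff.mpr (Or.inr rfl)) p
        omega
  rw [hphiu, phi_out hvout]
  unfold tval
  rw [if_pos (by rwa [hpu])]
  have hc0 : c0 F ℓ v = c0 F ℓ u :=
    (c0_eq_of_even hF hr (Nat.even_iff.mp hev)).symm
  rw [hc0]
  unfold c0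
  by_cases hevr : Even (F.dist (rt F u) u)
  · rw [if_pos hevr, if_pos hevr]
    right; ring
  · rw [if_neg hevr, if_neg hevr]
    left; ring

lemma adj_M (hℓ : 1 ≤ ℓ) (hF : F.IsAcyclic)
    (hpart : F.edgeSet ∪ M = G.edgeSet) (hdisj : Disjoint F.edgeSet M)
    (hdist : ∀ e₁ ∈ M, ∀ e₂ ∈ M, e₁ ≠ e₂ →
      ∀ x ∈ e₁, ∀ y ∈ e₂, ∀ w : F.Walk x y, 4 * ℓ - 2 ≤ w.length)
    (hodd : ∀ (w : V) (c : G.Walk w w), c.IsCycle → Odd c.length → ¬ c.length ≤ 2 * ℓ - 1)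
    (hm : s(u,v) ∈ M) : AdjZ (2*ℓ+1) (phi F M ℓ u) (phi F M ℓ v) := by
  have hMu : hasM M u := ⟨v, hm⟩
  have hMv : hasM M v := ⟨u, Sym2.eq_swap ▸ hm⟩
  have hpu : partner M u = v := partner_eq hℓ hdist hm
  have hpv : partner M v = u := partner_eq hℓ hdist (Sym2.eq_swap ▸ hm)
  have hne : u ≠ v := M_ne hpart hm
  by_cases hr : F.Reachable u v
  · by_cases hev : Even (F.dist u v)
    · rcases Sym2.eq_iff.mp (pick_eq s(u,v)) with ⟨h1, h2⟩ | ⟨h1, h2⟩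
      · exact adj_M_even hℓ hF hpart hdisj hdist hodd hm hr hev h1.symm
      · refine AdjZ.symm (adj_M_even hℓ hF hpart hdisj hdist hodd (Sym2.eq_swap ▸ hm)
          hr.symm (by rwa [F.dist_comm]) ?_)
        rw [Sym2.eq_swap]
        exact h1.symm
    · rw [phi_out (no_ball_odd hℓ hdist hm hr hev),
        phi_out (no_ball_odd hℓ hdist (Sym2.eq_swap ▸ hm) hr.symm
          (by rwa [F.dist_comm]))]
      exact c0_adj_of_odd hF hr (Nat.odd_iff.mp (Nat.not_even_iff_odd.mp hev))
  · have hcu : isCtr F M u := ⟨hMu, Or.inl (by rwa [hpu])⟩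
    have hcv : isCtr F M v := ⟨hMv, Or.inl (by rw [hpv]; exact fun h => hr h.symm)⟩
    have hphiu : phi F M ℓ u = tval F M ℓ u := by
      rw [phi_in hℓ hdist hcu (Reachable.refl u) (by rw [F.dist_self]; exact Nat.zero_le _),
        F.dist_self, psi_zero]
    have hphiv : phi F M ℓ v = tval F M ℓ v := by
      rw [phi_in hℓ hdist hcv (Reachable.refl v) (by rw [F.dist_self]; exact Nat.zero_le _),
        F.dist_self, psi_zero]
    rw [hphiu, hphiv]
    unfold tval
    have hru' : ¬ F.Reachable u (partner M u) := by rwa [hpu]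
    have hrv' : ¬ F.Reachable v (partner M v) := by rw [hpv]; exact fun h => hr h.symm
    rw [if_neg hru', if_neg hrv']
    rw [hpu, hpv]
    have hswap : s(v,u) = s(u,v) := Sym2.eq_swap
    rw [hswap]
    rcases Sym2.eq_iff.mp (pick_eq s(u,v)) with ⟨h1, h2⟩ | ⟨h1, h2⟩
    · have hyes : u = pick1 s(u,v) := h1.symm
      have hno : ¬ (v = pick1 s(u,v)) := by rw [h1]; exact hne.symm
      rw [if_pos hyes, if_neg hno]
      right; rfl
    · have hno : ¬ (u = pick1 s(u,v)) := by rw [h1]; exact hne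
      have hyes : v = pick1 s(u,v) := h1.symm
      rw [if_neg hno, if_pos hyes]
      left; rfl

end adj

end Stmt6

open SimpleGraph in
/-- Let `ℓ ≥ 1` and let `G` be a graph whose edge set is partitioned as `F ∪ M` where `F` is a
forest and the distance in `F` between any two distinct edges of `M` is at least `4ℓ-2`.
If `G` contains no odd cycle of length at most `2ℓ-1`, then `G` admits a homomorphism
to the cycle `C_{2ℓ+1}`. -/
theorem statement6 {V : Type*} (ℓ : ℕ) (hℓ : 1 ≤ ℓ) (G F : SimpleGraph V) (M : Set (Sym2 V))
    (hF : F.IsAcyclic)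
    (hpart : F.edgeSet ∪ M = G.edgeSet)
    (hdisj : Disjoint F.edgeSet M)
    (hdist : ∀ e₁ ∈ M, ∀ e₂ ∈ M, e₁ ≠ e₂ →
      ∀ x ∈ e₁, ∀ y ∈ e₂, ∀ w : F.Walk x y, 4 * ℓ - 2 ≤ w.length)
    (hodd : ∀ (u : V) (w : G.Walk u u), w.IsCycle → Odd w.length → ¬ w.length ≤ 2 * ℓ - 1) :
    Nonempty (G →g cycleGraph (2 * ℓ + 1)) := by
  classical
  haveI : NeZero (2*ℓ+1) := ⟨by omega⟩
  haveI : Fact (1 < 2*ℓ+1) := ⟨by omega⟩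
  refine ⟨⟨fun v => (Stmt6.phi F M ℓ v : Fin (2*ℓ+1)), ?_⟩⟩
  intro u v huv
  have hadjz : Stmt6.AdjZ (2*ℓ+1) (Stmt6.phi F M ℓ u) (Stmt6.phi F M ℓ v) := by
    have hmem : s(u,v) ∈ G.edgeSet := (G.mem_edgeSet).mpr huv
    rw [← hpart] at hmem
    rcases hmem with hFe | hMe
    · exact Stmt6.adj_F hℓ hF hpart hdist ((F.mem_edgeSet).mp hFe)
    · exact Stmt6.adj_M hℓ hF hpart hdisj hdist hodd hMe
  apply cycleGraph_adj'.mpr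
  rcases hadjz with h | h
  · left
    show ((Stmt6.phi F M ℓ u - Stmt6.phi F M ℓ v : ZMod (2*ℓ+1))).val = 1
    have h1 : (Stmt6.phi F M ℓ u - Stmt6.phi F M ℓ v : ZMod (2*ℓ+1)) = 1 := by
      rw [h]; ring
    rw [h1, ZMod.val_one]
  · right
    show ((Stmt6.phi F M ℓ v - Stmt6.phi F M ℓ u : ZMod (2*ℓ+1))).val = 1
    have h1 : (Stmt6.phi F M ℓ v - Stmt6.phi F M ℓ u : ZMod (2*ℓ+1)) = 1 := by
      rw [h]; ring
    rw [h1, ZMod.val_one]
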